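/- Let K, ξ ∈ ℝ with K ≠ 0 and ξ² > K²/4. Then every solution A : ℝ → ℂ of A'(T) = (K/4)·e^{iξT}·conj(A(T)) is bounded, i.e. there exists M such that |A(T)| ≤ M for all T ∈ ℝ. -/

import Mathlib

/-- In Case 1 (ξ² > K²/4), every solution of the amplitude equation
A' = (K/4)e^{iξT}conj(A) is bounded. -/
theorem stmt_7 (K ξ : ℝ) (hK : K ≠ 0) (hξ : ξ ^ 2 > K ^ 2 / 4) (A : ℝ → ℂ)
    (hODE : ∀ T : ℝ, HasDerivAt A
      (((K : ℂ) / 4) * Complex.exp (Complex.I * (ξ : ℂ) * (T : ℂ)) *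
        (starRingEnd ℂ) (A T)) T) :
    ∃ M : ℝ, ∀ T : ℝ, ‖A T‖ ≤ M := by
  have hξ0 : ξ ≠ 0 := by
    intro h; rw [h] at hξ; nlinarith [sq_nonneg K, sq_abs K, hK]
  set α : ℝ := K / 4 with hα
  set β : ℝ := ξ / 2 with hβ
  have hβ0 : β ≠ 0 := by simp [hβ, hξ0]
  set r : ℝ := α / β with hr
  have hr1 : r ^ 2 < 1 := by
    rw [hr, div_pow, div_lt_one (by positivity)]
    simp only [hα, hβ]
    nlinarith
  -- B T = exp(-(I ξ T)/2) * A T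
  set B : ℝ → ℂ := fun T => Complex.exp (-(Complex.I * ξ * T) / 2) * A T with hBdef
  have hB : ∀ T : ℝ, HasDerivAt B
      (-(Complex.I * ξ / 2) * B T + ((K : ℂ) / 4) * (starRingEnd ℂ) (B T)) T := by
    intro T
    have h1 : HasDerivAt (fun t : ℝ => -(Complex.I * ξ * (t : ℂ)) / 2)
        (-(Complex.I * ξ) / 2) T := by
      simpa using ((Complex.ofRealCLM.hasDerivAt (x := T)).const_mul
        (Complex.I * ξ)).neg.div_const 2
    have h2 := (h1.cexp.mul (hODE T))
    refine h2.congr_deriv ?_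
    symm
    have hc : (starRingEnd ℂ) (B T) =
        Complex.exp (Complex.I * ξ * T / 2) * (starRingEnd ℂ) (A T) := by
      simp only [hBdef, map_mul, ← Complex.exp_conj]
      congr 1
      simp [Complex.conj_I, map_ofNat]
    have hx : Complex.exp (Complex.I * ξ * T / 2) =
        Complex.exp (-(Complex.I * ξ * T) / 2) * Complex.exp (Complex.I * ξ * T) := by
      rw [← Complex.exp_add]; ring_nf
    rw [hc, hBdef]
    linear_combination ((K : ℂ) / 4 * (starRingEnd ℂ) (A T)) * hx
  set u : ℝ → ℝ := fun T => (B T).re with hu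
  set v : ℝ → ℝ := fun T => (B T).im with hv
  have hud : ∀ T : ℝ, HasDerivAt u (α * u T + β * v T) T := by
    intro T
    have := (Complex.reCLM.hasFDerivAt.comp_hasDerivAt T (hB T))
    refine this.congr_deriv ?_
    symm
    simp [Complex.mul_re, Complex.div_re, hα, hβ, Complex.normSq]
    ring
  have hvd : ∀ T : ℝ, HasDerivAt v (-β * u T - α * v T) T := by
    intro T
    have := (Complex.imCLM.hasFDerivAt.comp_hasDerivAt T (hB T))
    refine this.congr_deriv ?_
    symm
    simp [Complex.mul_im, Complex.div_im, hα, hβ, Complex.normSq]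
    ring
  set E : ℝ → ℝ := fun T => u T ^ 2 + v T ^ 2 + 2 * r * (u T * v T) with hE
  have hEd : ∀ T : ℝ, HasDerivAt E 0 T := by
    intro T
    have h := (((hud T).pow 2).add ((hvd T).pow 2)).add
      (((hud T).mul (hvd T)).const_mul (2 * r))
    refine h.congr_deriv ?_
    symm
    have hrb : r * β = α := by rw [hr, div_mul_cancel₀ α hβ0]
    linear_combination (2 * (u T ^ 2 - v T ^ 2)) * hrb
  have hEc : ∀ T : ℝ, E T = E 0 := by
    intro T
    exact is_const_of_deriv_eq_zero (fun x => (hEd x).differentiableAt)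
      (fun x => (hEd x).deriv) T 0
  -- bound
  have hkey : ∀ T : ℝ, u T ^ 2 + v T ^ 2 ≤ E 0 / (1 - |r|) := by
    intro T
    have habs : |r| < 1 := by nlinarith [sq_abs r, abs_nonneg r]
    have habs2 : |2 * r * (u T * v T)| = 2 * (|r| * (|u T| * |v T|)) := by
      rw [abs_mul, abs_mul, abs_mul, abs_two]; ring
    have hE' : u T ^ 2 + v T ^ 2 + 2 * r * (u T * v T) = E 0 := hEc T
    rw [le_div_iff₀ (by linarith)]
    nlinarith [neg_abs_le (2 * r * (u T * v T)), habs2, hE',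
      sq_nonneg (|u T| - |v T|), sq_abs (u T), sq_abs (v T),
      abs_nonneg r, abs_nonneg (u T), abs_nonneg (v T), hEc T]
  have hAB : ∀ T : ℝ, ‖A T‖ = ‖B T‖ := by
    intro T
    rw [hBdef]
    simp [Complex.norm_exp]
  refine ⟨Real.sqrt (E 0 / (1 - |r|)), fun T => ?_⟩
  rw [hAB T]
  have h2 : ‖B T‖ ^ 2 = u T ^ 2 + v T ^ 2 := by
    rw [← Complex.normSq_eq_norm_sq, Complex.normSq_apply]; ring
  have := hkey T
  have hnn : (0:ℝ) ≤ ‖B T‖ := norm_nonneg _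
  nlinarith [Real.sq_sqrt (le_trans (by nlinarith : (0:ℝ) ≤ u T ^2 + v T ^2) (hkey T)),
    Real.sqrt_nonneg (E 0 / (1 - |r|))]
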